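/- arXiv:math/0601155 — 2 statements merged into one kernel-verified Lean document; each statement's English description precedes it below -/
import Mathlib

section
/- In the Hecke algebra $\mathbb{H}$ of type $C_n^{(1)}$ with three parameters $\mathbf{q}_0,\mathbf{q}_1,\mathbf{q}_2$, the operators $\varepsilon(T_i)$ ($1 \le i \le n$) and multiplication operators $e^\lambda$ on the group algebra $\mathcal{A}[X^*(T)]$, defined by $\varepsilon(T_i)e^\lambda = \frac{e^\lambda - e^{s_i\lambda}}{e^{\alpha_i}-1} - \mathbf{q}_2\frac{e^\lambda - e^{s_i\lambda+\alpha_i}}{e^{\alpha_i}-1}$ for $1 \le i < n$ and $\varepsilon(T_n)e^\lambda = \frac{e^\lambda - e^{s_n\lambda}}{e^{\alpha_n}-1} + \mathbf{q}_0\mathbf{q}_1\frac{e^\lambda - e^{s_n\lambda+\alpha_n}}{e^{\alpha_n}-1} - (\mathbf{q}_0+\mathbf{q}_1)e^{\epsilon_n}\frac{e^\lambda - e^{s_n\lambda}}{e^{\alpha_n}-1}$, satisfy the quadratic Hecke relations: $(\varepsilon(T_i)+1)(\varepsilon(T_i)-\mathbf{q}_2)=0$ for $1 \le i < n$ and $(\varepsilon(T_n)+1)(\varepsilon(T_n)+\mathbf{q}_0\mathbf{q}_1)=0$.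 -/
namespace StmtSix

/-- The coefficient ring `𝒜 = ℂ[q₀^{±1}, q₁^{±1}, q₂^{±1}]`, realized as the group algebra
of `ℤ³` over `ℂ`. -/
abbrev Apar : Type := AddMonoidAlgebra ℂ (Fin 3 → ℤ)

/-- The parameters `q₀, q₁, q₂ ∈ 𝒜`. -/
noncomputable def q (j : Fin 3) : Apar :=
  AddMonoidAlgebra.single (Pi.single j 1) 1

/-- The group algebra `𝒜[X*(T)]` on the weight lattice `X*(T) = ℤⁿ` of type `Cₙ`. -/
abbrev Lat (n : ℕ) : Type := Fin n → ℤ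

abbrev Mod (n : ℕ) : Type := AddMonoidAlgebra Apar (Lat n)

/-- The basis element `e^λ`. -/
noncomputable def e {n : ℕ} (lam : Lat n) : Mod n := AddMonoidAlgebra.single lam 1

/-- The short simple root `αᵢ = εᵢ - ε_{i+1}` (`1 ≤ i < n`). -/
def alphaS {n : ℕ} (i : Fin n) (h : (i : ℕ) + 1 < n) : Lat n :=
  Pi.single i 1 - Pi.single ⟨i + 1, h⟩ 1

/-- The simple reflection `sᵢ` (`1 ≤ i < n`) acting on the weight lattice. -/
def sS {n : ℕ} (i : Fin n) (h : (i : ℕ) + 1 < n) (lam : Lat n) : Lat n :=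
  fun j => if j = i then lam ⟨i + 1, h⟩ else if j = (⟨i + 1, h⟩ : Fin n) then lam i else lam j

/-- The long simple root `αₙ = 2εₙ`. -/
def alphaL (n : ℕ) (hn : 0 < n) : Lat n := Pi.single ⟨n - 1, by omega⟩ 2

/-- The weight `εₙ`. -/
def epsN (n : ℕ) (hn : 0 < n) : Lat n := Pi.single ⟨n - 1, by omega⟩ 1

/-- The simple reflection `sₙ` acting on the weight lattice. -/
def sL {n : ℕ} (lam : Lat n) : Lat n := fun j => if (j : ℕ) = n - 1 then -lam j else lam j

lemma e_mul {n : ℕ} (x y : Lat n) : e x * e y = e (x + y) := by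
  simp [e, AddMonoidAlgebra.single_mul_single]

lemma e_zero {n : ℕ} : (e (0 : Lat n)) = 1 := rfl

lemma e_sub_one_ne {n : ℕ} {mu : Lat n} (h : mu ≠ 0) : (e mu - 1 : Mod n) ≠ 0 := by
  intro hc
  rw [sub_eq_zero, e, AddMonoidAlgebra.one_def (R := Apar) (M := Lat n)] at hc
  exact h ((AddMonoidAlgebra.single_left_inj (one_ne_zero (α := Apar))).1 hc)

lemma key {n : ℕ} (σ : Mod n →ₗ[Apar] Mod n)
    (hσmul : ∀ x y : Mod n, σ (x * y) = σ x * σ y)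
    (hσσ : ∀ x : Mod n, σ (σ x) = x)
    (hσ1 : σ (1 : Mod n) = 1)
    (A : Mod n) (hA : A * σ A = 1) (hg : A - 1 ≠ 0)
    (P Q : Mod n) (c d : Apar)
    (Hu : P*P - Q*(A*σ Q) + c • ((A-1)*P) + d • ((A-1)*(A-1)) = 0)
    (Hv : P*Q - Q*(A*σ P) + c • ((A-1)*Q) = 0)
    (E : Module.End Apar (Mod n))
    (hE : ∀ x : Mod n, (A-1) * E x = P * x + Q * σ x) :
    E*E + c • E + d • (1 : Module.End Apar (Mod n)) = 0 := by
  have hginv : ∀ y : Mod n, (A-1) * σ y = -A * (σ ((A-1) * y)) := by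
    intro y
    rw [hσmul, map_sub σ, hσ1]
    linear_combination (σ y) * hA
  apply LinearMap.ext
  intro x
  rw [LinearMap.zero_apply, LinearMap.add_apply, LinearMap.add_apply,
      LinearMap.smul_apply, LinearMap.smul_apply, Module.End.mul_apply,
      Module.End.one_apply]
  have hz : ((A-1)*(A-1)) * (E (E x) + c • E x + d • x) = 0 := by
    have h1 : (A-1) * ((A-1) * E (E x)) = P * ((A-1) * E x) + Q * ((A-1) * σ (E x)) := by
      rw [hE (E x)]; ring
    have h2 : (A-1) * σ (E x) = -A * (σ P * σ x + σ Q * x) := by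
      rw [hginv (E x), hE x, map_add σ, hσmul, hσmul, hσσ]
    rw [h2] at h1
    rw [Algebra.smul_def c, Algebra.smul_def d]
    rw [Algebra.smul_def c, Algebra.smul_def d] at Hu
    rw [Algebra.smul_def c] at Hv
    linear_combination h1 + (P + (algebraMap Apar (Mod n)) c * (A-1)) * (hE x)
      + x * Hu + (σ x) * Hv
  rcases mul_eq_zero.mp hz with h | h
  · exact absurd h (mul_ne_zero hg hg)
  · exact h

noncomputable def sig {n : ℕ} (sf : Lat n → Lat n) : Mod n →ₗ[Apar] Mod n :=
  AddMonoidAlgebra.mapDomainLinearMap Apar Apar sf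

lemma sig_single {n : ℕ} (sf : Lat n → Lat n) (lam : Lat n) :
    sig sf (e lam) = e (sf lam) := by
  exact AddMonoidAlgebra.mapDomainLinearMap_single sf 1 lam

lemma sig_mul {n : ℕ} (sf : Lat n → Lat n)
    (hadd : ∀ x y : Lat n, sf (x + y) = sf x + sf y) (x y : Mod n) :
    sig sf (x * y) = sig sf x * sig sf y := by
  have := AddMonoidAlgebra.mapDomain_mul (R := Apar) (AddHom.mk sf hadd) x y
  exact this

lemma sig_sig {n : ℕ} (sf : Lat n → Lat n) (hinv : ∀ x, sf (sf x) = x) (x : Mod n) :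
    sig sf (sig sf x) = x := by
  apply AddMonoidAlgebra.coeff_injective
  show Finsupp.mapDomain sf (Finsupp.mapDomain sf x.coeff) = x.coeff
  rw [← Finsupp.mapDomain_comp]
  have : sf ∘ sf = id := funext hinv
  rw [this, Finsupp.mapDomain_id]

lemma sig_one {n : ℕ} (sf : Lat n → Lat n) (h0 : sf 0 = 0) :
    sig sf (1 : Mod n) = 1 := by
  have : (1 : Mod n) = e 0 := rfl
  rw [this, sig_single, h0]

lemma extend_basis {n : ℕ} (sf : Lat n → Lat n) (g P Q : Mod n)
    (E : Module.End Apar (Mod n))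
    (hb : ∀ lam : Lat n, g * E (e lam) = P * e lam + Q * e (sf lam)) :
    ∀ x : Mod n, g * E x = P * x + Q * sig sf x := by
  intro x
  induction x using AddMonoidAlgebra.induction_linear with
  | zero => simp
  | add f g' hf hg' =>
    rw [map_add, map_add, mul_add, hf, hg']; ring
  | single a b =>
    have hs : (AddMonoidAlgebra.single a b : Mod n) = b • e a := by
      rw [e]
      rw [AddMonoidAlgebra.smul_single, smul_eq_mul, mul_one]
    rw [hs, map_smul, map_smul, mul_smul_comm, hb a, sig_single,
      smul_add, mul_smul_comm, mul_smul_comm]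

section LatticeLemmas
variable {n : ℕ} (i : Fin n) (h : (i : ℕ) + 1 < n)

lemma sS_add (x y : Lat n) : sS i h (x + y) = sS i h x + sS i h y := by
  funext j; simp only [sS, Pi.add_apply]; split_ifs <;> rfl

lemma sS_zero : sS i h 0 = 0 := by
  funext j; simp only [sS, Pi.zero_apply]; split_ifs <;> rfl

lemma sS_swap (lam : Lat n) : sS i h lam = fun j => lam (Equiv.swap i ⟨i + 1, h⟩ j) := by
  funext j
  simp only [sS, Equiv.swap_apply_def]
  split_ifs <;> rfl

lemma sS_invol (x : Lat n) : sS i h (sS i h x) = x := by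
  rw [sS_swap, sS_swap]
  funext j
  simp

lemma sS_alpha : sS i h (alphaS i h) = -(alphaS i h) := by
  have hne : (i : Fin n) ≠ ⟨(i:ℕ) + 1, h⟩ := by simp [Fin.ext_iff]
  rw [sS_swap]
  funext j
  simp only [alphaS, Pi.sub_apply, Pi.neg_apply, Pi.single_apply]
  by_cases h1 : j = i
  · subst h1
    rw [Equiv.swap_apply_left]
    simp [hne, hne.symm]
  · by_cases h2 : j = ⟨(i:ℕ) + 1, h⟩
    · subst h2
      rw [Equiv.swap_apply_right]
      simp [hne, hne.symm]
    · rw [Equiv.swap_apply_of_ne_of_ne h1 h2]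
      simp [h1, h2]

lemma alphaS_ne : alphaS i h ≠ 0 := by
  intro hc
  have := congrFun hc i
  have hne : (i : Fin n) ≠ ⟨(i:ℕ) + 1, h⟩ := by simp [Fin.ext_iff]
  simp [alphaS, Pi.single_apply, hne] at this

variable (hn : 0 < n)

lemma sL_add (x y : Lat n) : sL (x + y) = sL x + sL y := by
  funext j; simp only [sL, Pi.add_apply]; split_ifs <;> ring

lemma sL_zero : sL (0 : Lat n) = 0 := by
  funext j; simp only [sL, Pi.zero_apply]; split_ifs <;> ring

lemma sL_invol (x : Lat n) : sL (sL x) = x := by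
  funext j; simp only [sL]; split_ifs <;> ring

lemma sL_alpha : sL (alphaL n hn) = -(alphaL n hn) := by
  funext j; simp only [sL, alphaL, Pi.neg_apply, Pi.single_apply]
  split_ifs with h1 h2 <;> simp_all [Fin.ext_iff]

lemma sL_eps : sL (epsN n hn) = -(epsN n hn) := by
  funext j; simp only [sL, epsN, Pi.neg_apply, Pi.single_apply]
  split_ifs with h1 h2 <;> simp_all [Fin.ext_iff]

lemma alphaL_sub_eps : alphaL n hn + -(epsN n hn) = epsN n hn := by
  funext j; simp only [alphaL, epsN, Pi.add_apply, Pi.neg_apply, Pi.single_apply]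
  split_ifs <;> ring

lemma alphaL_ne : alphaL n hn ≠ 0 := by
  intro hc
  have := congrFun hc ⟨n - 1, by omega⟩
  simp [alphaL] at this

end LatticeLemmas

lemma end_expand_sub {R M : Type*} [CommRing R] [AddCommGroup M] [Module R M]
    (E : Module.End R M) (c : R) :
    (E + 1) * (E - c • 1) = E*E + (1 - c) • E + (-c) • (1 : Module.End R M) := by
  rw [mul_sub, add_mul, add_mul, one_mul, mul_smul_comm, mul_smul_comm,
    sub_smul, one_smul, neg_smul, mul_one, mul_one]
  abel

lemma end_expand_add {R M : Type*} [CommRing R] [AddCommGroup M] [Module R M]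
    (E : Module.End R M) (c : R) :
    (E + 1) * (E + c • 1) = E*E + (1 + c) • E + c • (1 : Module.End R M) := by
  rw [mul_add, add_mul, add_mul, one_mul, mul_smul_comm, mul_smul_comm,
    add_smul, one_smul, mul_one, mul_one]
  abel

set_option maxHeartbeats 1600000 in
/-- The operators `ε(Tᵢ)` of the basic representation of the Hecke algebra of type
`C_n^{(1)}` with parameters `q₀, q₁, q₂` satisfy the quadratic Hecke relations
`(ε(Tᵢ) + 1)(ε(Tᵢ) - q₂) = 0` for `1 ≤ i < n` and
`(ε(Tₙ) + 1)(ε(Tₙ) + q₀q₁) = 0`.  (Each operator is characterized by its values on the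
basis `e^λ`, the displayed quotients by `e^{αᵢ} - 1` being well-defined since `e^{αᵢ} - 1`
is a non-zero-divisor dividing the numerators.) -/
theorem hecke_quadratic_relations (n : ℕ) (hn : 0 < n) :
    (∀ (i : Fin n) (h : (i : ℕ) + 1 < n) (E : Module.End Apar (Mod n)),
      (∀ lam : Lat n,
        (e (alphaS i h) - 1) * E (e lam) =
          ((e lam - e (sS i h lam)) - q 2 • (e lam - e (sS i h lam + alphaS i h)))) →
      (E + 1) * (E - q 2 • 1) = 0) ∧
    (∀ E : Module.End Apar (Mod n),
      (∀ lam : Lat n,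
        (e (alphaL n hn) - 1) * E (e lam) =
          ((e lam - e (sL lam)) + (q 0 * q 1) • (e lam - e (sL lam + alphaL n hn))
            - (q 0 + q 1) • (e (epsN n hn) * (e lam - e (sL lam))))) →
      (E + 1) * (E + (q 0 * q 1) • 1) = 0) := by
  constructor
  · -- short roots
    intro i h E hyp
    have hA : e (alphaS i h) * sig (sS i h) (e (alphaS i h)) = 1 := by
      rw [sig_single, sS_alpha, e_mul, add_neg_cancel, e_zero]
    have hg : (e (alphaS i h) - 1 : Mod n) ≠ 0 := e_sub_one_ne (alphaS_ne i h)
    have hb : ∀ lam : Lat n, (e (alphaS i h) - 1) * E (e lam) =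
        ((1 : Mod n) - q 2 • 1) * e lam + (q 2 • e (alphaS i h) - 1) * e (sS i h lam) := by
      intro lam
      rw [hyp lam, show e (sS i h lam + alphaS i h) = e (sS i h lam) * e (alphaS i h) from
        (e_mul _ _).symm]
      simp only [Algebra.smul_def, map_sub, map_one]
      ring
    have hE := extend_basis (sS i h) _ _ _ E hb
    have hσQ : sig (sS i h) (q 2 • e (alphaS i h) - 1) = q 2 • e (-(alphaS i h)) - 1 := by
      rw [map_sub, map_smul, sig_single, sS_alpha, sig_one _ (sS_zero i h)]
    have hσP : sig (sS i h) ((1 : Mod n) - q 2 • 1) = (1 : Mod n) - q 2 • 1 := by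
      rw [map_sub, map_smul, sig_one _ (sS_zero i h)]
    have hAA : e (alphaS i h) * e (-(alphaS i h)) = 1 := by
      rw [e_mul, add_neg_cancel, e_zero]
    have hAQ : e (alphaS i h) * (q 2 • e (-(alphaS i h)) - 1) =
        q 2 • (1 : Mod n) - e (alphaS i h) := by
      rw [mul_sub, mul_smul_comm, hAA, mul_one]
    have Hu : ((1:Mod n) - q 2 • 1) * ((1:Mod n) - q 2 • 1)
        - (q 2 • e (alphaS i h) - 1) *
            (e (alphaS i h) * sig (sS i h) (q 2 • e (alphaS i h) - 1))
        + (1 - q 2) • ((e (alphaS i h) - 1) * ((1:Mod n) - q 2 • 1))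
        + (-(q 2)) • ((e (alphaS i h) - 1) * (e (alphaS i h) - 1)) = 0 := by
      rw [hσQ, hAQ]
      simp only [Algebra.smul_def, map_sub, map_one, map_neg]
      ring
    have Hv : ((1:Mod n) - q 2 • 1) * (q 2 • e (alphaS i h) - 1)
        - (q 2 • e (alphaS i h) - 1) *
            (e (alphaS i h) * sig (sS i h) ((1:Mod n) - q 2 • 1))
        + (1 - q 2) • ((e (alphaS i h) - 1) * (q 2 • e (alphaS i h) - 1)) = 0 := by
      rw [hσP]
      simp only [Algebra.smul_def, map_sub, map_one]
      ring
    have hk := key (sig (sS i h)) (sig_mul _ (sS_add i h)) (sig_sig _ (sS_invol i h))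
      (sig_one _ (sS_zero i h)) (e (alphaS i h)) hA hg
      ((1:Mod n) - q 2 • 1) (q 2 • e (alphaS i h) - 1) (1 - q 2) (-(q 2)) Hu Hv E hE
    rw [end_expand_sub E (q 2), hk]
  · -- long root
    intro E hyp
    have hA : e (alphaL n hn) * sig sL (e (alphaL n hn)) = 1 := by
      rw [sig_single, sL_alpha, e_mul, add_neg_cancel, e_zero]
    have hg : (e (alphaL n hn) - 1 : Mod n) ≠ 0 := e_sub_one_ne (alphaL_ne hn)
    have hb : ∀ lam : Lat n, (e (alphaL n hn) - 1) * E (e lam) =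
        ((1 : Mod n) + (q 0 * q 1) • 1 - (q 0 + q 1) • e (epsN n hn)) * e lam
        + (-((1 : Mod n) + (q 0 * q 1) • e (alphaL n hn) - (q 0 + q 1) • e (epsN n hn)))
          * e (sL lam) := by
      intro lam
      rw [hyp lam, show e (sL lam + alphaL n hn) = e (sL lam) * e (alphaL n hn) from
        (e_mul _ _).symm]
      simp only [Algebra.smul_def, map_add, map_mul, map_one]
      ring
    have hE := extend_basis sL _ _ _ E hb
    have hσP : sig sL ((1 : Mod n) + (q 0 * q 1) • 1 - (q 0 + q 1) • e (epsN n hn)) =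
        (1 : Mod n) + (q 0 * q 1) • 1 - (q 0 + q 1) • e (-(epsN n hn)) := by
      rw [map_sub, map_add, map_smul, map_smul, sig_one _ sL_zero, sig_single, sL_eps hn]
    have hσQ : sig sL (-((1 : Mod n) + (q 0 * q 1) • e (alphaL n hn)
          - (q 0 + q 1) • e (epsN n hn))) =
        -((1 : Mod n) + (q 0 * q 1) • e (-(alphaL n hn))
          - (q 0 + q 1) • e (-(epsN n hn))) := by
      rw [map_neg, map_sub, map_add, map_smul, map_smul, sig_one _ sL_zero, sig_single,
        sig_single, sL_eps hn, sL_alpha hn]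
    have hAA : e (alphaL n hn) * e (-(alphaL n hn)) = 1 := by
      rw [e_mul, add_neg_cancel, e_zero]
    have hAB : e (alphaL n hn) * e (-(epsN n hn)) = e (epsN n hn) := by
      rw [e_mul, alphaL_sub_eps hn]
    have hAσP : e (alphaL n hn) * ((1 : Mod n) + (q 0 * q 1) • 1
          - (q 0 + q 1) • e (-(epsN n hn))) =
        e (alphaL n hn) + (q 0 * q 1) • e (alphaL n hn) - (q 0 + q 1) • e (epsN n hn) := by
      simp only [Algebra.smul_def]
      linear_combination (-(algebraMap Apar (Mod n) (q 0 + q 1))) * hAB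
    have hAσQ : e (alphaL n hn) * (-((1 : Mod n) + (q 0 * q 1) • e (-(alphaL n hn))
          - (q 0 + q 1) • e (-(epsN n hn)))) =
        -(e (alphaL n hn) + (q 0 * q 1) • 1 - (q 0 + q 1) • e (epsN n hn)) := by
      simp only [Algebra.smul_def]
      linear_combination (-(algebraMap Apar (Mod n) (q 0 * q 1))) * hAA
        + (algebraMap Apar (Mod n) (q 0 + q 1)) * hAB
    have Hu : ((1:Mod n) + (q 0 * q 1) • 1 - (q 0 + q 1) • e (epsN n hn)) *
          ((1:Mod n) + (q 0 * q 1) • 1 - (q 0 + q 1) • e (epsN n hn))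
        - (-((1:Mod n) + (q 0 * q 1) • e (alphaL n hn) - (q 0 + q 1) • e (epsN n hn))) *
            (e (alphaL n hn) * sig sL (-((1:Mod n) + (q 0 * q 1) • e (alphaL n hn)
              - (q 0 + q 1) • e (epsN n hn))))
        + (1 + q 0 * q 1) • ((e (alphaL n hn) - 1) *
            ((1:Mod n) + (q 0 * q 1) • 1 - (q 0 + q 1) • e (epsN n hn)))
        + (q 0 * q 1) • ((e (alphaL n hn) - 1) * (e (alphaL n hn) - 1)) = 0 := by
      rw [hσQ, hAσQ]
      simp only [Algebra.smul_def, map_add, map_mul, map_one]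
      ring
    have Hv : ((1:Mod n) + (q 0 * q 1) • 1 - (q 0 + q 1) • e (epsN n hn)) *
          (-((1:Mod n) + (q 0 * q 1) • e (alphaL n hn) - (q 0 + q 1) • e (epsN n hn)))
        - (-((1:Mod n) + (q 0 * q 1) • e (alphaL n hn) - (q 0 + q 1) • e (epsN n hn))) *
            (e (alphaL n hn) * sig sL ((1:Mod n) + (q 0 * q 1) • 1
              - (q 0 + q 1) • e (epsN n hn)))
        + (1 + q 0 * q 1) • ((e (alphaL n hn) - 1) *
            (-((1:Mod n) + (q 0 * q 1) • e (alphaL n hn) - (q 0 + q 1) • e (epsN n hn))))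
        = 0 := by
      rw [hσP, hAσP]
      simp only [Algebra.smul_def, map_add, map_mul, map_one]
      ring
    have hk := key (sig sL) (sig_mul _ sL_add) (sig_sig _ sL_invol)
      (sig_one _ sL_zero) (e (alphaL n hn)) hA hg
      ((1:Mod n) + (q 0 * q 1) • 1 - (q 0 + q 1) • e (epsN n hn))
      (-((1:Mod n) + (q 0 * q 1) • e (alphaL n hn) - (q 0 + q 1) • e (epsN n hn)))
      (1 + q 0 * q 1) (q 0 * q 1) Hu Hv E hE
    rw [end_expand_add E (q 0 * q 1), hk]

end StmtSix
end

section
/- With $\varepsilon$ as in the basic representation of the Hecke algebra of type $C_n^{(1)}$ on $\mathcal{A}[X^*(T)]$, the Bernstein–Lusztig relation holds: for all $\lambda \in X^*(T)$ and $1 \le i < n$, $\varepsilon(T_i)\circ e^\lambda - e^{s_i\lambda}\circ\varepsilon(T_i) = (1-\mathbf{q}_2)\frac{e^\lambda - e^{s_i\lambda}}{e^{\alpha_i}-1}$ as operators on $\mathcal{A}[X^*(T)]$, where $e^\lambda$ denotes the multiplication operator. -/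
namespace StmtSeven

/-- The coefficient ring `𝒜 = ℂ[q₀^{±1}, q₁^{±1}, q₂^{±1}]`, realized as the group algebra
of `ℤ³` over `ℂ`. -/
abbrev Apar : Type := AddMonoidAlgebra ℂ (Fin 3 → ℤ)

/-- The parameters `q₀, q₁, q₂ ∈ 𝒜`. -/
noncomputable def q (j : Fin 3) : Apar :=
  AddMonoidAlgebra.single (Pi.single j 1) 1

/-- The weight lattice `X*(T) = ℤⁿ` of type `Cₙ`. -/
abbrev Lat (n : ℕ) : Type := Fin n → ℤ

/-- The group algebra `𝒜[X*(T)]`. -/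
abbrev Mod (n : ℕ) : Type := AddMonoidAlgebra Apar (Lat n)

/-- The basis element `e^λ`. -/
noncomputable def e {n : ℕ} (lam : Lat n) : Mod n := AddMonoidAlgebra.single lam 1

/-- The short simple root `αᵢ = εᵢ - ε_{i+1}` (`1 ≤ i < n`). -/
def alphaS {n : ℕ} (i : Fin n) (h : (i : ℕ) + 1 < n) : Lat n :=
  Pi.single i 1 - Pi.single ⟨i + 1, h⟩ 1

/-- The simple reflection `sᵢ` (`1 ≤ i < n`) acting on the weight lattice. -/
def sS {n : ℕ} (i : Fin n) (h : (i : ℕ) + 1 < n) (lam : Lat n) : Lat n :=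
  fun j => if j = i then lam ⟨i + 1, h⟩ else if j = (⟨i + 1, h⟩ : Fin n) then lam i else lam j

/- Auxiliary lemmas -/

lemma e_mul {n : ℕ} (a b : Lat n) : e a * e b = e (a + b) := by
  simp [e, AddMonoidAlgebra.single_mul_single]

lemma sS_add {n : ℕ} (i : Fin n) (h : (i : ℕ) + 1 < n) (a b : Lat n) :
    sS i h (a + b) = sS i h a + sS i h b := by
  funext j
  simp only [sS, Pi.add_apply]
  split_ifs <;> ring

lemma sS_zero {n : ℕ} (i : Fin n) (h : (i : ℕ) + 1 < n) :
    sS i h (0 : Lat n) = 0 := by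
  funext j
  simp only [sS, Pi.zero_apply]
  split_ifs <;> rfl

/-- `sS` as an additive monoid hom. -/
def sHom {n : ℕ} (i : Fin n) (h : (i : ℕ) + 1 < n) : Lat n →+ Lat n where
  toFun := sS i h
  map_zero' := sS_zero i h
  map_add' := sS_add i h

lemma alphaS_ne_zero {n : ℕ} (i : Fin n) (h : (i : ℕ) + 1 < n) :
    alphaS i h ≠ 0 := by
  intro hc
  have hzi := congrFun hc i
  have hne : (⟨(i : ℕ) + 1, h⟩ : Fin n) ≠ i := by
    intro hh
    have := congrArg (Fin.val) hh
    simp at this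
  simp [alphaS, Pi.single_apply, hne] at hzi

lemma e_alpha_sub_one_ne_zero {n : ℕ} (i : Fin n) (h : (i : ℕ) + 1 < n) :
    e (alphaS i h) - 1 ≠ 0 := by
  intro hc
  rw [sub_eq_zero] at hc
  have h1 : (1 : Mod n) = AddMonoidAlgebra.single (0 : Lat n) (1 : Apar) := rfl
  rw [e, h1, AddMonoidAlgebra.single_inj] at hc
  rcases hc with ⟨ha, _⟩ | ⟨hb, _⟩
  · exact alphaS_ne_zero i h ha
  · exact one_ne_zero hb

/-- **Bernstein–Lusztig relation.**  With `ε` the basic representation of the Hecke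
algebra of type `C_n^{(1)}` on `𝒜[X*(T)]` — i.e. `ε(Tᵢ)` is the operator `E` characterized
by `(e^{αᵢ} - 1)·E(e^λ) = (e^λ - e^{sᵢλ}) - q₂(e^λ - e^{sᵢλ + αᵢ})` — we have, for all
`λ ∈ X*(T)` and `1 ≤ i < n`,
`ε(Tᵢ) ∘ e^λ - e^{sᵢλ} ∘ ε(Tᵢ) = (1 - q₂)·((e^λ - e^{sᵢλ})/(e^{αᵢ} - 1))`
as operators on `𝒜[X*(T)]` (here `e^λ` denotes the multiplication operator, and the
quotient `dd = (e^λ - e^{sᵢλ})/(e^{αᵢ} - 1)` is the element characterized by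
`(e^{αᵢ} - 1)·dd = e^λ - e^{sᵢλ}`). -/
theorem bernstein_lusztig_relation (n : ℕ)
    (i : Fin n) (h : (i : ℕ) + 1 < n) (E : Module.End Apar (Mod n))
    (hE : ∀ lam : Lat n,
      (e (alphaS i h) - 1) * E (e lam) =
        ((e lam - e (sS i h lam)) - q 2 • (e lam - e (sS i h lam + alphaS i h))))
    (lam : Lat n) (dd : Mod n)
    (hdd : (e (alphaS i h) - 1) * dd = e lam - e (sS i h lam)) :
    ∀ v : Mod n, E (e lam * v) - e (sS i h lam) * E v = (1 - q 2) • (dd * v) := by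
  intro v
  set α := alphaS i h with hα
  set S : Mod n →ₗ[Apar] Mod n := AddMonoidAlgebra.mapDomainLinearMap Apar Apar (sS i h) with hS
  have hSapply : ∀ w : Mod n, S w = AddMonoidAlgebra.mapDomain (sS i h) w :=
    fun w => rfl
  have hSe : ∀ a : Lat n, S (e a) = e (sS i h a) := by
    intro a
    rw [hSapply]
    simp [e, AddMonoidAlgebra.mapDomain_single]
  -- The defining property extended by linearity to all of `Mod n`
  have key : ∀ w : Mod n,
      (e α - 1) * E w = (w - S w) - q 2 • (w - e α * S w) := by
    intro w
    induction w using AddMonoidAlgebra.induction_linear with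
    | zero => simp
    | add f g hf hg =>
        rw [map_add, mul_add, hf, hg, map_add]
        simp only [Algebra.smul_def]
        ring
    | single a b =>
        have hb : (AddMonoidAlgebra.single a b : Mod n) = b • e a := by
          simp [e, AddMonoidAlgebra.smul_single']
        rw [hb, map_smul, mul_smul_comm, hE a, map_smul, hSe a]
        have h1 : e (sS i h a + α) = e α * e (sS i h a) := by
          rw [e_mul, add_comm]
        rw [h1]
        simp only [Algebra.smul_def]
        ring
  -- S is multiplicative
  have Smul : ∀ x y : Mod n, S (x * y) = S x * S y := by
    intro x y
    simp only [hSapply]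
    exact AddMonoidAlgebra.mapDomain_mul (sHom i h) x y
  -- multiply the goal by (e α - 1) and cancel
  apply mul_left_cancel₀ (e_alpha_sub_one_ne_zero i h)
  rw [mul_sub, key (e lam * v), Smul, hSe lam]
  have h2 : (e α - 1) * (e (sS i h lam) * E v)
      = e (sS i h lam) * ((e α - 1) * E v) := by ring
  rw [h2, key v]
  have hddv := congrArg (· * v) hdd
  simp only [Algebra.smul_def]
  rw [sub_mul (e lam)] at hddv
  simp only [map_sub, map_one]
  linear_combination ((algebraMap Apar (Mod n)) (q 2) - 1) * hddv

end StmtSeven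
end
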